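/- Let A be a Banach space and a = (a_i) a bounded sequence in A. The set {(φ(a_i))_i : φ ∈ A*, ‖φ‖ ≤ 1} is totally bounded in ℓ^∞ if and only if the set {a_1, a_2, …} is totally bounded in A. -/

import Mathlib

open NormedSpace
open scoped ENNReal

/-- For a bounded sequence `a` in `A`, the dual shadow `{(φ(aᵢ))ᵢ : ‖φ‖ ≤ 1}` is
totally bounded in `ℓ^∞` iff the set `{a₁, a₂, …}` is totally bounded in `A`. -/
theorem totallyBounded_shadow_infty_iff {A : Type*}
    [NormedAddCommGroup A] [NormedSpace ℂ A] [CompleteSpace A]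
    (a : ℕ → A) (hbdd : ∃ C : ℝ, ∀ i, ‖a i‖ ≤ C) :
    TotallyBounded
      {x : lp (fun _ : ℕ => ℂ) ∞ | ∃ φ : StrongDual ℂ A, ‖φ‖ ≤ 1 ∧ ∀ i, x i = φ (a i)} ↔
    TotallyBounded (Set.range a) := by
  classical
  obtain ⟨C, hC⟩ := hbdd
  have hC0 : 0 ≤ C := (norm_nonneg _).trans (hC 0)
  set S := {x : lp (fun _ : ℕ => ℂ) ∞ | ∃ φ : StrongDual ℂ A, ‖φ‖ ≤ 1 ∧ ∀ i, x i = φ (a i)}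
    with hSdef
  have hmem : ∀ φ : StrongDual ℂ A, ‖φ‖ ≤ 1 → Memℓp (fun i => φ (a i)) ∞ := by
    intro φ hφ
    apply memℓp_infty
    refine ⟨C, ?_⟩
    rintro r ⟨i, rfl⟩
    calc ‖φ (a i)‖ ≤ ‖φ‖ * ‖a i‖ := φ.le_opNorm _
      _ ≤ 1 * C := mul_le_mul hφ (hC i) (norm_nonneg _) zero_le_one
      _ = C := one_mul C
  -- coordinatewise bound from lp distance
  have coord : ∀ (x y : lp (fun _ : ℕ => ℂ) ∞) (k : ℕ), ‖x k - y k‖ ≤ dist x y := by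
    intro x y k
    have h1 : ‖(x - y) k‖ ≤ ‖x - y‖ := lp.norm_apply_le_norm ENNReal.top_ne_zero (x - y) k
    rw [dist_eq_norm]
    rw [lp.coeFn_sub] at h1
    exact h1
  constructor
  · -- shadow totally bounded → range totally bounded
    intro hS
    rw [Metric.totallyBounded_iff]
    intro ε hε
    have hε8 : (0 : ℝ) < ε / 8 := by linarith
    obtain ⟨t, htS, htfin, htcov⟩ := hS.exists_subset (Metric.dist_mem_uniformity hε8)
    haveI : Fintype ↥t := htfin.fintype
    choose Φ hΦ1 hΦ2 using fun y : t => htS y.2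
    set g : ℕ → (↥t → ℂ) := fun i y => Φ y (a i) with hg
    have hgTB : TotallyBounded (Set.range g) := by
      refine (isCompact_closedBall (0 : ↥t → ℂ) C).totallyBounded.subset ?_
      rintro _ ⟨i, rfl⟩
      rw [Metric.mem_closedBall, dist_pi_le_iff hC0]
      intro y
      simp only [Pi.zero_apply, dist_zero_right]
      calc ‖Φ y (a i)‖ ≤ ‖Φ y‖ * ‖a i‖ := (Φ y).le_opNorm _
        _ ≤ 1 * C := mul_le_mul (hΦ1 y) (hC i) (norm_nonneg _) zero_le_one
        _ = C := one_mul C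
    obtain ⟨u, hug, hufin, hucov⟩ := hgTB.exists_subset (Metric.dist_mem_uniformity hε8)
    haveI : Fintype ↥u := hufin.fintype
    choose idx hidx using fun v : ↥u => hug v.2
    refine ⟨Set.range (fun v : ↥u => a (idx v)), Set.finite_range _, ?_⟩
    rintro _ ⟨i, rfl⟩
    have : g i ∈ ⋃ v ∈ u, {x | dist x v < ε / 8} := hucov ⟨i, rfl⟩
    simp only [Set.mem_iUnion, Set.mem_setOf_eq] at this
    obtain ⟨v, hv, hdv⟩ := this
    set j := idx ⟨v, hv⟩ with hj
    refine Set.mem_iUnion₂.2 ⟨a j, ⟨⟨v, hv⟩, rfl⟩, ?_⟩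
    rw [Metric.mem_ball]
    -- bound ‖a i - a j‖ via Hahn-Banach
    obtain ⟨φ, hφ1, hφx⟩ := exists_dual_vector'' ℂ (a i - a j)
    set xφ : lp (fun _ : ℕ => ℂ) ∞ := ⟨fun k => φ (a k), hmem φ hφ1⟩ with hxφ
    have hxφS : xφ ∈ S := ⟨φ, hφ1, fun k => rfl⟩
    have : xφ ∈ ⋃ y ∈ t, {x | dist x y < ε / 8} := htcov hxφS
    simp only [Set.mem_iUnion, Set.mem_setOf_eq] at this
    obtain ⟨y, hy, hdy⟩ := this
    have hyc : ∀ k, ‖φ (a k) - Φ ⟨y, hy⟩ (a k)‖ ≤ ε / 8 := by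
      intro k
      have h1 := coord xφ y k
      have h2 : (y : lp (fun _ : ℕ => ℂ) ∞) k = Φ ⟨y, hy⟩ (a k) := hΦ2 ⟨y, hy⟩ k
      have h3 : xφ k = φ (a k) := rfl
      rw [h2, h3] at h1
      linarith
    have hΦij : ‖Φ ⟨y, hy⟩ (a i) - Φ ⟨y, hy⟩ (a j)‖ ≤ ε / 8 := by
      have h1 : dist (g i ⟨y, hy⟩) (g j ⟨y, hy⟩) ≤ dist (g i) (g j) :=
        dist_le_pi_dist (g i) (g j) ⟨y, hy⟩
      have h2 : g j = v := hidx ⟨v, hv⟩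
      have hdv' : dist (g i) (g j) < ε / 8 := by rw [h2]; exact hdv
      have := h1.trans hdv'.le
      simpa [hg, dist_eq_norm] using this
    have hnorm : ‖a i - a j‖ = ‖φ (a i) - φ (a j)‖ := by
      rw [← map_sub, hφx]
      simp
    have : ‖a i - a j‖ ≤ 3 * (ε / 8) := by
      rw [hnorm]
      calc ‖φ (a i) - φ (a j)‖
          ≤ ‖φ (a i) - Φ ⟨y, hy⟩ (a i)‖ + ‖Φ ⟨y, hy⟩ (a i) - Φ ⟨y, hy⟩ (a j)‖
            + ‖Φ ⟨y, hy⟩ (a j) - φ (a j)‖ := by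
            rw [show φ (a i) - φ (a j) = (φ (a i) - Φ ⟨y, hy⟩ (a i))
              + (Φ ⟨y, hy⟩ (a i) - Φ ⟨y, hy⟩ (a j)) + (Φ ⟨y, hy⟩ (a j) - φ (a j)) by ring]
            exact norm_add₃_le
        _ ≤ ε / 8 + ε / 8 + ε / 8 := by
            have h1 := hyc i
            have h2 := hyc j
            have h3 : ‖Φ ⟨y, hy⟩ (a j) - φ (a j)‖ = ‖φ (a j) - Φ ⟨y, hy⟩ (a j)‖ :=
              norm_sub_rev _ _
            linarith [hΦij]
        _ = 3 * (ε / 8) := by ring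
    rw [dist_eq_norm]
    linarith
  · -- range totally bounded → shadow totally bounded
    intro hA
    rw [Metric.totallyBounded_iff]
    intro ε hε
    have hε8 : (0 : ℝ) < ε / 8 := by linarith
    have hε4 : (0 : ℝ) < ε / 4 := by linarith
    obtain ⟨t, hta, htfin, htcov⟩ := hA.exists_subset (Metric.dist_mem_uniformity hε8)
    haveI : Fintype ↥t := htfin.fintype
    set h : StrongDual ℂ A → (↥t → ℂ) := fun φ y => φ (y : A) with hh
    set K := h '' {φ : StrongDual ℂ A | ‖φ‖ ≤ 1} with hK
    have hKTB : TotallyBounded K := by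
      refine (isCompact_closedBall (0 : ↥t → ℂ) C).totallyBounded.subset ?_
      rintro _ ⟨φ, hφ, rfl⟩
      rw [Metric.mem_closedBall, dist_pi_le_iff hC0]
      intro y
      simp only [Pi.zero_apply, dist_zero_right]
      obtain ⟨i, hi⟩ := hta y.2
      calc ‖φ (y : A)‖ ≤ ‖φ‖ * ‖(y : A)‖ := φ.le_opNorm _
        _ ≤ 1 * C := by
            refine mul_le_mul hφ ?_ (norm_nonneg _) zero_le_one
            rw [← hi]; exact hC i
        _ = C := one_mul C
    obtain ⟨u, huK, hufin, hucov⟩ := hKTB.exists_subset (Metric.dist_mem_uniformity hε4)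
    haveI : Fintype ↥u := hufin.fintype
    choose Ψ hΨ1 hΨ2 using fun v : ↥u => huK v.2
    refine ⟨Set.range (fun v : ↥u => (⟨fun k => Ψ v (a k), hmem _ (hΨ1 v)⟩ :
      lp (fun _ : ℕ => ℂ) ∞)), Set.finite_range _, ?_⟩
    rintro x ⟨φ, hφ1, hφx⟩
    have : h φ ∈ ⋃ v ∈ u, {z | dist z v < ε / 4} := hucov ⟨φ, hφ1, rfl⟩
    simp only [Set.mem_iUnion, Set.mem_setOf_eq] at this
    obtain ⟨v, hv, hdv⟩ := this
    set ψ := Ψ ⟨v, hv⟩ with hψ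
    refine Set.mem_iUnion₂.2 ⟨_, ⟨⟨v, hv⟩, rfl⟩, ?_⟩
    rw [Metric.mem_ball, dist_eq_norm]
    have hcoord : ∀ k, ‖φ (a k) - ψ (a k)‖ ≤ ε / 2 := by
      intro k
      obtain ⟨y, hy, hdy⟩ := by
        have := htcov ⟨k, rfl⟩
        simpa only [Set.mem_iUnion, Set.mem_setOf_eq] using this
      have hφψy : ‖φ y - ψ y‖ ≤ ε / 4 := by
        have h1 : dist (h φ ⟨y, hy⟩) (h ψ ⟨y, hy⟩) ≤ dist (h φ) (h ψ) :=
          dist_le_pi_dist (h φ) (h ψ) ⟨y, hy⟩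
        have h2 : h ψ = v := hΨ2 ⟨v, hv⟩
        have hdv' : dist (h φ) (h ψ) < ε / 4 := by rw [h2]; exact hdv
        have := h1.trans hdv'.le
        simpa [hh, dist_eq_norm] using this
      have h1 : ‖φ (a k) - φ y‖ ≤ ε / 8 := by
        rw [← map_sub]
        calc ‖φ (a k - y)‖ ≤ ‖φ‖ * ‖a k - y‖ := φ.le_opNorm _
          _ ≤ 1 * (ε / 8) := by
              refine mul_le_mul hφ1 ?_ (norm_nonneg _) zero_le_one
              rw [← dist_eq_norm]; exact hdy.le
          _ = ε / 8 := one_mul _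
      have h2 : ‖ψ y - ψ (a k)‖ ≤ ε / 8 := by
        rw [← map_sub]
        calc ‖ψ (y - a k)‖ ≤ ‖ψ‖ * ‖y - a k‖ := ψ.le_opNorm _
          _ ≤ 1 * (ε / 8) := by
              refine mul_le_mul (hΨ1 _) ?_ (norm_nonneg _) zero_le_one
              rw [← dist_eq_norm, dist_comm]; exact hdy.le
          _ = ε / 8 := one_mul _
      calc ‖φ (a k) - ψ (a k)‖
          = ‖(φ (a k) - φ y) + (φ y - ψ y) + (ψ y - ψ (a k))‖ := by
            rw [show φ (a k) - ψ (a k) = (φ (a k) - φ y) + (φ y - ψ y) + (ψ y - ψ (a k))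
              by ring]
        _ ≤ ‖φ (a k) - φ y‖ + ‖φ y - ψ y‖ + ‖ψ y - ψ (a k)‖ := norm_add₃_le
        _ ≤ ε / 8 + ε / 4 + ε / 8 := by linarith
        _ = ε / 2 := by ring
    have hle : ‖x - (⟨fun k => ψ (a k), hmem _ (hΨ1 ⟨v, hv⟩)⟩ : lp (fun _ : ℕ => ℂ) ∞)‖
        ≤ ε / 2 := by
      apply lp.norm_le_of_forall_le (by linarith : (0:ℝ) ≤ ε / 2)
      intro k
      have : (x - (⟨fun k => ψ (a k), hmem _ (hΨ1 ⟨v, hv⟩)⟩ : lp (fun _ : ℕ => ℂ) ∞)) k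
          = φ (a k) - ψ (a k) := by
        rw [lp.coeFn_sub]; exact congrArg (fun z => z - ψ (a k)) (hφx k)
      rw [this]
      exact hcoord k
    exact lt_of_le_of_lt hle (by linarith)
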